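/- Let S be a Hausdorff pseudocompact primitive topological inverse semigroup, written as the orthogonal sum of a family {B_{λ_i}(G_i)}_{i∈I} of topological Brandt semigroups with zero. Then every non-zero H-class of S is a pseudocompact closed-and-open subset of S. -/

import Mathlib

open Topology

/-- A (Hausdorff) topological space is *pseudocompact* if every locally finite
family of non-empty open subsets is finite. -/
def IsPseudocompact (X : Type*) [TopologicalSpace X] : Prop :=
  ∀ 𝒰 : Set (Set X), (∀ U ∈ 𝒰, IsOpen U ∧ U.Nonempty) →
    LocallyFinite (fun U : 𝒰 => (U : Set X)) → 𝒰.Finite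

/-- `inv` witnesses that the semigroup `S` is an *inverse semigroup*:
for every `x`, `inv x` is the unique `y` with `x*y*x = x` and `y*x*y = y`. -/
structure IsInverseSemigroup (S : Type*) [Mul S] (inv : S → S) : Prop where
  mul_inv_mul : ∀ x : S, x * inv x * x = x
  inv_mul_inv : ∀ x : S, inv x * x * inv x = inv x
  inv_unique : ∀ x y : S, x * y * x = x → y * x * y = y → y = inv x

/-- A semigroup with zero is *primitive* when every non-zero idempotent is
minimal among non-zero idempotents for the natural partial order
`f ≤ e ↔ f*e = e*f = f`. -/
def IsPrimitiveInverse (S : Type*) [Mul S] [Zero S] : Prop :=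
  ∀ e f : S, IsIdempotentElem e → e ≠ 0 → IsIdempotentElem f → f ≠ 0 →
    f * e = f → e * f = f → f = e

/-- The orthogonal sum of the family of Brandt extensions `B_{λ i}(G i)`:
the set `{0} ∪ ⋃ i, (λ i × G i × λ i)`. -/
abbrev OrthSum (I : Type*) (ι : I → Type*) (G : I → Type*) : Type _ :=
  Option (Σ i : I, ι i × G i × ι i)

instance (I : Type*) (ι : I → Type*) (G : I → Type*) : Zero (OrthSum I ι G) :=
  ⟨(none : Option (Σ i : I, ι i × G i × ι i))⟩

/-- The non-zero element `(α, g, β)` of the summand `B_{λ i}(G i)`. -/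
def OrthSum.elem {I : Type*} {ι : I → Type*} {G : I → Type*}
    (i : I) (α : ι i) (g : G i) (β : ι i) : OrthSum I ι G :=
  some ⟨i, (α, g, β)⟩

open Classical in
/-- Multiplication of the orthogonal sum: products are computed inside the
summand `B_{λ i}(G i)` when both factors lie in it, and are `0` otherwise. -/
noncomputable instance (I : Type*) (ι : I → Type*) (G : I → Type*) [∀ i, Mul (G i)] :
    Mul (OrthSum I ι G) :=
  ⟨fun x y =>
    match x, y with
    | some ⟨i, (α, a, β)⟩, some ⟨j, (γ, b, δ)⟩ =>
        if h : i = j then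
          (if cast (congrArg ι h) β = γ then
            (some ⟨j, (cast (congrArg ι h) α, (cast (congrArg G h) a) * b, δ)⟩ :
              Option (Σ i : I, ι i × G i × ι i))
          else none)
        else none
    | _, _ => none⟩

/-- A witness that the semigroup `S` with zero is (isomorphic, as a semigroup
with zero, to) the orthogonal sum of a family of Brandt semigroups
`B_{λ i}(G i)`, `λ i ≥ 1`. -/
structure BrandtDecomposition (S : Type*) [Mul S] [Zero S] where
  I : Type*
  ι : I → Type*
  G : I → Type*
  [instNonempty : ∀ i, Nonempty (ι i)]
  [instGroup : ∀ i, Group (G i)]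
  e : S ≃ OrthSum I ι G
  map_mul : ∀ x y : S, e (x * y) = e x * e y
  map_zero : e 0 = 0

/-- Green's relation `H = L ∩ R` on a semigroup. -/
def GreenH {S : Type*} [Mul S] (a b : S) : Prop :=
  (insert a (Set.range fun s : S => s * a) = insert b (Set.range fun s : S => s * b)) ∧
    (insert a (Set.range fun s : S => a * s) = insert b (Set.range fun s : S => b * s))

/-- The `H`-class of an element. -/
def hclass {S : Type*} [Mul S] (a : S) : Set S := {b | GreenH a b}

set_option linter.unusedSectionVars false

namespace OrthSum
variable {I : Type*} {ι : I → Type*} {G : I → Type*} [∀ i, Mul (G i)]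

lemma zero_mul' (x : OrthSum I ι G) : (0 : OrthSum I ι G) * x = 0 := by
  rcases x with _ | ⟨i, α, a, β⟩ <;> rfl

lemma mul_zero' (x : OrthSum I ι G) : x * (0 : OrthSum I ι G) = 0 := by
  rcases x with _ | ⟨i, α, a, β⟩ <;> rfl

open Classical in
lemma elem_mul_elem (i : I) (α β γ δ : ι i) (a b : G i) :
    (elem i α a β : OrthSum I ι G) * elem i γ b δ =
      if β = γ then elem i α (a * b) δ else 0 := by
  show (if h : i = i then _ else _) = _
  rw [dif_pos rfl]
  by_cases h : β = γ
  · rw [if_pos (show cast (congrArg ι rfl) β = γ from h), if_pos h]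
    rfl
  · rw [if_neg (show ¬ cast (congrArg ι rfl) β = γ from h), if_neg h]
    rfl

lemma elem_mul_elem_ne {i j : I} (h : i ≠ j) (α β : ι i) (a : G i) (γ δ : ι j) (b : G j) :
    (elem i α a β : OrthSum I ι G) * elem j γ b δ = 0 := dif_neg h

lemma elem_ne_zero (i : I) (α : ι i) (a : G i) (β : ι i) :
    (elem i α a β : OrthSum I ι G) ≠ 0 := by simp [elem]

lemma elem_inj {i : I} {α β γ δ : ι i} {a b : G i}
    (h : (elem i α a β : OrthSum I ι G) = elem i γ b δ) : α = γ ∧ a = b ∧ β = δ := by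
  simp only [elem, Option.some_inj, Sigma.mk.inj_iff, heq_eq_eq, Prod.mk.injEq] at h
  exact ⟨h.2.1, h.2.2.1, h.2.2.2⟩

lemma elem_inj' {i j : I} {α β : ι i} {γ δ : ι j} {a : G i} {b : G j}
    (h : (elem i α a β : OrthSum I ι G) = elem j γ b δ) : i = j := by
  simpa [elem, Sigma.mk.inj_iff] using congrArg (fun x => x.map Sigma.fst) h

end OrthSum

set_option linter.unusedSectionVars false

lemma isPseudocompact_of_isClopen {X : Type*} [TopologicalSpace X] {A : Set X}
    (hA : IsClopen A) (hX : IsPseudocompact X) : IsPseudocompact ↥A := by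
  intro 𝒰 hU hlf
  set f : Set ↥A → Set X := fun U => Subtype.val '' U with hf
  have hinj : Function.Injective f := Set.image_injective.mpr Subtype.val_injective
  have hfin : (f '' 𝒰).Finite := by
    apply hX
    · rintro V ⟨U, hU𝒰, rfl⟩
      exact ⟨hA.isOpen.isOpenMap_subtype_val _ (hU U hU𝒰).1, (hU U hU𝒰).2.image _⟩
    · intro x
      by_cases hx : x ∈ A
      · obtain ⟨t, ht, htfin⟩ := hlf ⟨x, hx⟩
        obtain ⟨W, hW, hWt⟩ := (mem_nhds_subtype A ⟨x, hx⟩ t).mp ht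
        refine ⟨W ∩ A, Filter.inter_mem hW (hA.isOpen.mem_nhds hx), ?_⟩
        set g : ↥(f '' 𝒰) → Set ↥A := fun V => Subtype.val ⁻¹' (V : Set X) with hg
        have hgmem : ∀ V : ↥(f '' 𝒰), g V ∈ 𝒰 := by
          rintro ⟨V, U, hU𝒰, rfl⟩
          simpa [g, f, Set.preimage_image_eq _ Subtype.val_injective] using hU𝒰
        have hginj : Function.Injective g := by
          rintro ⟨V₁, U₁, hU₁, rfl⟩ ⟨V₂, U₂, hU₂, rfl⟩ h
          simp only [g, f, Set.preimage_image_eq _ Subtype.val_injective] at h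
          simp [f, h]
        have hsub : {V : ↥(f '' 𝒰) | ((V : Set X) ∩ (W ∩ A)).Nonempty} ⊆
            (fun V : ↥(f '' 𝒰) => (⟨g V, hgmem V⟩ : ↥𝒰)) ⁻¹'
              {U : ↥𝒰 | ((U : Set ↥A) ∩ t).Nonempty} := by
          rintro ⟨V, U, hU𝒰, rfl⟩ ⟨z, hzV, hzW, hzA⟩
          obtain ⟨u, huU, rfl⟩ := hzV
          exact ⟨u, Set.mem_image_of_mem _ huU, hWt hzW⟩
        refine (htfin.preimage ?_).subset hsub
        exact fun V₁ _ V₂ _ h => hginj (congrArg Subtype.val h)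
      · refine ⟨Aᶜ, hA.isClosed.isOpen_compl.mem_nhds hx, ?_⟩
        convert Set.finite_empty
        refine Set.eq_empty_iff_forall_notMem.mpr ?_
        rintro ⟨V, U, hU𝒰, rfl⟩ ⟨z, hzV, hz⟩
        obtain ⟨u, _, rfl⟩ := hzV
        exact hz u.2
  exact hfin.of_finite_image hinj.injOn

section OrthAux
variable {S : Type*} [SemigroupWithZero S]
    {I : Type*} {ι : I → Type*} {G : I → Type*} [∀ i, Group (G i)]
    (ε : S ≃ OrthSum I ι G)

lemma orth_left_ideal (hm : ∀ x y : S, ε (x * y) = ε x * ε y) (hz : ε 0 = 0) {i : I} {β : ι i} {b : S} {γ : ι i} {h : G i}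
    (hb : ε b = OrthSum.elem i γ h β) :
    insert b (Set.range fun s : S => s * b) =
      {x : S | ε x = 0 ∨ ∃ c k, ε x = OrthSum.elem i c k β} := by
  ext x
  simp only [Set.mem_insert_iff, Set.mem_range, Set.mem_setOf_eq]
  constructor
  · rintro (rfl | ⟨s, rfl⟩)
    · exact Or.inr ⟨γ, h, hb⟩
    · rw [hm, hb]
      rcases hs : ε s with _ | ⟨j, c, k, d⟩
      · left
        exact OrthSum.zero_mul' _
      · have hs' : (some ⟨j, (c, k, d)⟩ : OrthSum I ι G) = OrthSum.elem j c k d := rfl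
        rw [hs']
        by_cases hji : j = i
        · subst hji
          rw [OrthSum.elem_mul_elem]
          by_cases hd : d = γ
          · rw [if_pos hd]
            exact Or.inr ⟨c, k * h, rfl⟩
          · rw [if_neg hd]
            exact Or.inl rfl
        · rw [OrthSum.elem_mul_elem_ne hji]
          exact Or.inl rfl
  · rintro (h0 | ⟨c, k, hxk⟩)
    · have : x = 0 := ε.injective (h0.trans hz.symm)
      subst this
      exact Or.inr ⟨0, zero_mul b⟩
    · refine Or.inr ⟨ε.symm (OrthSum.elem i c (k * h⁻¹) γ), ε.injective ?_⟩
      rw [hm, hb, Equiv.apply_symm_apply, OrthSum.elem_mul_elem, if_pos rfl, hxk]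
      simp

lemma orth_right_ideal (hm : ∀ x y : S, ε (x * y) = ε x * ε y) (hz : ε 0 = 0) {i : I} {α : ι i} {b : S} {δ : ι i} {h : G i}
    (hb : ε b = OrthSum.elem i α h δ) :
    insert b (Set.range fun s : S => b * s) =
      {x : S | ε x = 0 ∨ ∃ c k, ε x = OrthSum.elem i α k c} := by
  ext x
  simp only [Set.mem_insert_iff, Set.mem_range, Set.mem_setOf_eq]
  constructor
  · rintro (rfl | ⟨s, rfl⟩)
    · exact Or.inr ⟨δ, h, hb⟩
    · rw [hm, hb]
      rcases hs : ε s with _ | ⟨j, c, k, d⟩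
      · left
        exact OrthSum.mul_zero' _
      · have hs' : (some ⟨j, (c, k, d)⟩ : OrthSum I ι G) = OrthSum.elem j c k d := rfl
        rw [hs']
        by_cases hji : i = j
        · subst hji
          rw [OrthSum.elem_mul_elem]
          by_cases hd : δ = c
          · rw [if_pos hd]
            exact Or.inr ⟨d, h * k, rfl⟩
          · rw [if_neg hd]
            exact Or.inl rfl
        · rw [OrthSum.elem_mul_elem_ne hji]
          exact Or.inl rfl
  · rintro (h0 | ⟨c, k, hxk⟩)
    · have : x = 0 := ε.injective (h0.trans hz.symm)
      subst this
      exact Or.inr ⟨0, mul_zero b⟩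
    · refine Or.inr ⟨ε.symm (OrthSum.elem i δ (h⁻¹ * k) c), ε.injective ?_⟩
      rw [hm, hb, Equiv.apply_symm_apply, OrthSum.elem_mul_elem, if_pos rfl, hxk]
      simp [mul_assoc]

end OrthAux

lemma orth_inv {S : Type*} [SemigroupWithZero S]
    {I : Type*} {ι : I → Type*} {G : I → Type*} [∀ i, Group (G i)]
    (ε : S ≃ OrthSum I ι G) (hm : ∀ x y : S, ε (x * y) = ε x * ε y)
    (inv : S → S) (hinv : IsInverseSemigroup S inv)
    {x : S} {j : I} {c d : ι j} {k : G j} (hx : ε x = OrthSum.elem j c k d) :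
    inv x = ε.symm (OrthSum.elem j d k⁻¹ c) := by
  refine (hinv.inv_unique x _ ?_ ?_).symm
  · apply ε.injective
    rw [hm, hm, hx, Equiv.apply_symm_apply, OrthSum.elem_mul_elem, if_pos rfl,
      OrthSum.elem_mul_elem, if_pos rfl]
    simp
  · apply ε.injective
    rw [hm, hm, Equiv.apply_symm_apply, hx, OrthSum.elem_mul_elem, if_pos rfl,
      OrthSum.elem_mul_elem, if_pos rfl]
    simp


/-- Let `S` be a Hausdorff pseudocompact primitive topological
inverse semigroup, written as the orthogonal sum of a family of topological
Brandt semigroups with zero. Then every non-zero `H`-class of `S` is a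
pseudocompact closed-and-open subset of `S`. -/
theorem hclass_isClopen_and_pseudocompact_of_pseudocompact_primitive
    {S : Type*} [SemigroupWithZero S] [TopologicalSpace S] [T2Space S]
    (continuous_mul : Continuous fun p : S × S => p.1 * p.2)
    (inv : S → S) (hinv : IsInverseSemigroup S inv) (hinvc : Continuous inv)
    (hnt : Nontrivial S) (hprim : IsPrimitiveInverse S)
    (hpc : IsPseudocompact S)
    (hdecomp : BrandtDecomposition S) :
    ∀ a : S, a ≠ 0 → IsClopen (hclass a) ∧ IsPseudocompact ↥(hclass a) := by
  intro a ha
  classical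
  letI := hdecomp.instGroup
  letI := hdecomp.instNonempty
  set ε := hdecomp.e with hεdef
  have hm : ∀ x y : S, ε (x * y) = ε x * ε y := hdecomp.map_mul
  have hz : ε (0 : S) = 0 := hdecomp.map_zero
  rcases hE : ε a with _ | ⟨i, α, g, β⟩
  · exact absurd (ε.injective (hE.trans hz.symm)) ha
  have hEa : ε a = OrthSum.elem i α g β := hE
  -- characterization of the H-class
  have hchar : ∀ x : S, x ∈ hclass a ↔ ∃ h, ε x = OrthSum.elem i α h β := by
    intro x
    constructor
    · rintro ⟨hL, hR⟩
      have hx0 : ε x ≠ 0 := by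
        intro h0
        have hx0' : x = 0 := ε.injective (h0.trans hz.symm)
        subst hx0'
        have haL : a ∈ insert a (Set.range fun s : S => s * a) := Set.mem_insert _ _
        rw [hL] at haL
        rcases Set.mem_insert_iff.mp haL with h | ⟨s, hs⟩
        · exact ha h
        · refine ha ?_
          rw [← hs]
          exact mul_zero s
      have hxL : x ∈ insert x (Set.range fun s : S => s * x) := Set.mem_insert _ _
      rw [← hL, orth_left_ideal ε hm hz hEa] at hxL
      have hxR : x ∈ insert x (Set.range fun s : S => x * s) := Set.mem_insert _ _
      rw [← hR, orth_right_ideal ε hm hz hEa] at hxR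
      rcases hxL with h0 | ⟨c, k, hck⟩
      · exact absurd h0 hx0
      rcases hxR with h0 | ⟨c', k', hck'⟩
      · exact absurd h0 hx0
      obtain ⟨hcα, -, -⟩ := OrthSum.elem_inj (hck.symm.trans hck')
      exact ⟨k, by rw [hck, hcα]⟩
    · rintro ⟨h, hx⟩
      refine ⟨?_, ?_⟩
      · rw [orth_left_ideal ε hm hz hEa, orth_left_ideal ε hm hz hx]
      · rw [orth_right_ideal ε hm hz hEa, orth_right_ideal ε hm hz hx]
  set E := ε.symm (OrthSum.elem i α 1 α) with hEdef
  set F := ε.symm (OrthSum.elem i β 1 β) with hFdef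
  have hεE : ε E = OrthSum.elem i α 1 α := ε.apply_symm_apply _
  have hεF : ε F = OrthSum.elem i β 1 β := ε.apply_symm_apply _
  -- open characterization
  have hopen_char : ∀ x : S, x ∈ hclass a ↔ E * x * F ≠ 0 := by
    intro x
    rw [hchar]
    have hφ : ε (E * x * F) = (ε E * ε x) * ε F := by rw [hm, hm]
    constructor
    · rintro ⟨h, hx⟩ h0
      have h0' : ε (E * x * F) = 0 := by rw [h0, hz]
      rw [hφ, hεE, hεF, hx, OrthSum.elem_mul_elem, if_pos rfl,
        OrthSum.elem_mul_elem, if_pos rfl] at h0'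
      exact OrthSum.elem_ne_zero _ _ _ _ h0'
    · intro hne
      by_contra hno
      apply hne
      apply ε.injective
      rw [hφ, hz, hεE, hεF]
      rcases hx : ε x with _ | ⟨j, c, k, d⟩
      · rfl
      · have hx' : ε x = OrthSum.elem j c k d := hx
        show OrthSum.elem i α 1 α * OrthSum.elem j c k d * OrthSum.elem i β 1 β = 0
        by_cases hji : j = i
        · subst hji
          by_cases hc : α = c
          · by_cases hd : d = β
            · exact absurd ⟨k, by rw [hx', ← hc, hd]⟩ hno
            · rw [OrthSum.elem_mul_elem, if_pos hc, OrthSum.elem_mul_elem, if_neg hd]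
          · rw [OrthSum.elem_mul_elem, if_neg hc, OrthSum.zero_mul']
        · rw [OrthSum.elem_mul_elem_ne (fun hij => hji hij.symm), OrthSum.zero_mul']
  -- closed characterization
  have hclosed_char : ∀ x : S, x ∈ hclass a ↔ (x * inv x = E ∧ inv x * x = F) := by
    intro x
    rw [hchar]
    constructor
    · rintro ⟨h, hx⟩
      have hi := orth_inv ε hm inv hinv hx
      constructor
      · apply ε.injective
        rw [hm, hx, hi, Equiv.apply_symm_apply, OrthSum.elem_mul_elem, if_pos rfl, hεE]
        simp
      · apply ε.injective
        rw [hm, hx, hi, Equiv.apply_symm_apply, OrthSum.elem_mul_elem, if_pos rfl, hεF]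
        simp
    · rintro ⟨h1, h2⟩
      rcases hx : ε x with _ | ⟨j, c, k, d⟩
      · exfalso
        have hx0 : x = 0 := ε.injective (hx.trans hz.symm)
        subst hx0
        rw [zero_mul] at h1
        have h1' : ε E = ε (0 : S) := congrArg ε h1.symm
        rw [hεE, hz] at h1'
        exact OrthSum.elem_ne_zero _ _ _ _ h1'
      · have hx' : ε x = OrthSum.elem j c k d := hx
        have hi := orth_inv ε hm inv hinv hx'
        have hxx : ε (x * inv x) = OrthSum.elem j c 1 c := by
          rw [hm, hx', hi, Equiv.apply_symm_apply, OrthSum.elem_mul_elem, if_pos rfl]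
          simp
        have hfx : ε (inv x * x) = OrthSum.elem j d 1 d := by
          rw [hm, hx', hi, Equiv.apply_symm_apply, OrthSum.elem_mul_elem, if_pos rfl]
          simp
        have h1' : (OrthSum.elem j c 1 c : OrthSum hdecomp.I hdecomp.ι hdecomp.G) = OrthSum.elem i α 1 α := by
          rw [← hxx, h1, hεE]
        have h2' : (OrthSum.elem j d 1 d : OrthSum hdecomp.I hdecomp.ι hdecomp.G) = OrthSum.elem i β 1 β := by
          rw [← hfx, h2, hεF]
        obtain rfl := OrthSum.elem_inj' h1'
        obtain ⟨hcα, -, -⟩ := OrthSum.elem_inj h1'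
        obtain ⟨hdβ, -, -⟩ := OrthSum.elem_inj h2'
        subst hcα
        subst hdβ
        exact ⟨k, rfl⟩
  have hset_open : hclass a = (fun x : S => E * x * F) ⁻¹' ({(0 : S)}ᶜ) := by
    ext x
    simpa [Set.mem_preimage] using hopen_char x
  have hset_closed : hclass a = (fun x : S => (x * inv x, inv x * x)) ⁻¹' {((E : S), (F : S))} := by
    ext x
    simp only [Set.mem_preimage, Set.mem_singleton_iff, Prod.mk.injEq]
    exact hclosed_char x
  have hcont1 : Continuous fun x : S => E * x * F :=
    continuous_mul.comp
      ((continuous_mul.comp (continuous_const.prodMk continuous_id)).prodMk continuous_const)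
  have hcont2 : Continuous fun x : S => (x * inv x, inv x * x) :=
    (continuous_mul.comp (continuous_id.prodMk hinvc)).prodMk
      (continuous_mul.comp (hinvc.prodMk continuous_id))
  have hopen : IsOpen (hclass a) := by
    rw [hset_open]
    exact (isOpen_compl_singleton).preimage hcont1
  have hclosed : IsClosed (hclass a) := by
    rw [hset_closed]
    exact (isClosed_singleton).preimage hcont2
  exact ⟨⟨hclosed, hopen⟩, isPseudocompact_of_isClopen ⟨hclosed, hopen⟩ hpc⟩
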